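/- Let X be a Tychonoff space and let P be a closed hereditary topological property. Then λ_P X = ⋃{ int_{βX} cl_{βX} Z : Z a zero-set of X having P }. -/

import Mathlib

open Set Topology Filter

universe u

/-- A one-point Tychonoff extension of `X`: a Tychonoff space containing (a homeomorphic copy
of) `X` as a dense subspace whose complement is a single point `pt`. -/
structure OnePointExt (X : Type u) [TopologicalSpace X] : Type (u + 1) where
  carrier : Type u
  top : TopologicalSpace carrier
  t35 : @T35Space carrier top
  ι : X → carrier
  emb : @Topology.IsEmbedding X carrier _ top ι
  pt : carrier
  range_eq : Set.range ι = {pt}ᶜ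
  dense : @DenseRange carrier top X ι

attribute [instance] OnePointExt.top OnePointExt.t35

variable {X : Type u} [TopologicalSpace X]

/-- The partial order on one-point extensions: `Y₁ ≤ Y₂` iff there is a continuous map from
`Y₂` into `Y₁` fixing `X` pointwise. -/
def OnePointExt.le (Y1 Y2 : OnePointExt X) : Prop :=
  ∃ f : Y2.carrier → Y1.carrier, Continuous f ∧ ∀ x, f (Y2.ι x) = Y1.ι x

/-- Equivalence of extensions: a homeomorphism fixing `X` pointwise. -/
def OnePointExt.equiv (Y1 Y2 : OnePointExt X) : Prop :=
  ∃ h : Y1.carrier ≃ₜ Y2.carrier, ∀ x, h (Y1.ι x) = Y2.ι x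

/-- `τ_Y : βX → βY`, the unique continuous extension of `id_X`. -/
noncomputable def OnePointExt.tau (Y : OnePointExt X) : StoneCech X → StoneCech Y.carrier :=
  stoneCechExtend (continuous_stoneCechUnit.comp Y.emb.continuous)

/-- `Θ_X(Y) = τ_Y⁻¹(Y \ X)`, a subset of `βX`. -/
noncomputable def OnePointExt.theta (Y : OnePointExt X) : Set (StoneCech X) :=
  Y.tau ⁻¹' {stoneCechUnit Y.pt}

/-- A zero-set: `f⁻¹(0)` for a continuous `f : Z → [0,1]`. -/
def IsZeroSet {Z : Type u} [TopologicalSpace Z] (A : Set Z) : Prop :=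
  ∃ f : Z → unitInterval, Continuous f ∧ A = f ⁻¹' {0}

/-- A cozero-set: a complement of a zero-set. -/
def IsCozeroSet {Z : Type u} [TopologicalSpace Z] (A : Set Z) : Prop :=
  ∃ f : Z → unitInterval, Continuous f ∧ A = (f ⁻¹' {0})ᶜ

/-- `λ_P X = ⋃ { int_{βX} cl_{βX} C : C a cozero-set of X whose closure in X has P }`. -/
def lambdaP (P : (Z : Type u) → [TopologicalSpace Z] → Prop) (X : Type u)
    [TopologicalSpace X] : Set (StoneCech X) :=
  ⋃ C ∈ {C : Set X | IsCozeroSet C ∧ P (closure C)},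
    interior (closure (stoneCechUnit '' C))

/-- A pseudocompact space: every continuous real-valued function is bounded. -/
def Pseudocompact (Z : Type u) [TopologicalSpace Z] : Prop :=
  ∀ f : Z → ℝ, Continuous f → ∃ M, ∀ z, |f z| ≤ M

/-- `P` is a topological property: it is invariant under homeomorphisms. -/
def TopProperty (P : (Z : Type u) → [TopologicalSpace Z] → Prop) : Prop :=
  ∀ (Z W : Type u) [TopologicalSpace Z] [TopologicalSpace W], Z ≃ₜ W → P Z → P W

/-- `P` is closed hereditary: closed subspaces of a space with `P` have `P`. -/
def ClosedHereditary (P : (Z : Type u) → [TopologicalSpace Z] → Prop) : Prop :=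
  ∀ (Z : Type u) [TopologicalSpace Z], P Z → ∀ F : Set Z, IsClosed F → P F

/-- `P` is preserved under finite closed sums of subspaces. -/
def FiniteClosedSums (P : (Z : Type u) → [TopologicalSpace Z] → Prop) : Prop :=
  ∀ (Z : Type u) [TopologicalSpace Z] [T2Space Z] (n : ℕ) (F : Fin n → Set Z),
    (∀ i, IsClosed (F i)) → (∀ i, P (F i)) → (⋃ i, F i) = univ → P Z

/-- `P` is preserved under locally finite closed sums of subspaces. -/
def LocallyFiniteClosedSums (P : (Z : Type u) → [TopologicalSpace Z] → Prop) : Prop :=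
  ∀ (Z : Type u) [TopologicalSpace Z] [T2Space Z] (ι : Type u) (F : ι → Set Z),
    LocallyFinite F → (∀ i, IsClosed (F i)) → (∀ i, P (F i)) → (⋃ i, F i) = univ → P Z

/-- `P` is preserved under countable closed sums of subspaces. -/
def CountableClosedSums (P : (Z : Type u) → [TopologicalSpace Z] → Prop) : Prop :=
  ∀ (Z : Type u) [TopologicalSpace Z] [T2Space Z] (F : ℕ → Set Z),
    (∀ i, IsClosed (F i)) → (∀ i, P (F i)) → (⋃ i, F i) = univ → P Z

/-- Mrówka's condition (W): if a Tychonoff space `T` has a point `p` with an open base `B` at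
`p` such that `T \ b` has `P` for each `b ∈ B`, then `T` has `P`. -/
def MrowkaW (P : (Z : Type u) → [TopologicalSpace Z] → Prop) : Prop :=
  ∀ (T : Type u) [TopologicalSpace T] [T35Space T] (p : T) (B : Set (Set T)),
    (∀ b ∈ B, IsOpen b ∧ p ∈ b) →
    (∀ V : Set T, IsOpen V → p ∈ V → ∃ b ∈ B, b ⊆ V) →
    (∀ b ∈ B, P (↥(bᶜ))) → P T

/-- `X` is locally-P: every point has an open neighborhood whose closure has `P`. -/
def LocallyP (P : (Z : Type u) → [TopologicalSpace Z] → Prop)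
    (X : Type u) [TopologicalSpace X] : Prop :=
  ∀ x : X, ∃ U : Set X, IsOpen U ∧ x ∈ U ∧ P (closure U)

/-- `P` coincides with pseudocompactness. -/
def IsPseudocompactness (P : (Z : Type u) → [TopologicalSpace Z] → Prop) : Prop :=
  ∀ (Z : Type u) [TopologicalSpace Z], P Z ↔ Pseudocompact Z

/-- A `P`-far one-point extension: for every zero-set `Z` of `X` contained in a cozero-set `C`
of `X` whose closure has `P`, the closure of `Z` in the extension misses the remainder. -/
def OnePointExt.PFar (P : (Z : Type u) → [TopologicalSpace Z] → Prop)
    (Y : OnePointExt X) : Prop :=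
  ∀ Z C : Set X, IsZeroSet Z → IsCozeroSet C → P (closure C) → Z ⊆ C →
    Y.pt ∉ closure (Y.ι '' Z)

/-- Čech-complete: `Z` is a Gδ-set in `βZ`. -/
def CechComplete (Z : Type u) [TopologicalSpace Z] : Prop :=
  IsGδ (Set.range (stoneCechUnit : Z → StoneCech Z))

/-- The extension is first countable at the added point. -/
def OnePointExt.FirstCountableAtPt (Y : OnePointExt X) : Prop :=
  (𝓝 Y.pt).IsCountablyGenerated

/-- Strong zero-dimensionality: `βX` has an open base of clopen sets. -/
def StronglyZeroDimensional (X : Type u) [TopologicalSpace X] : Prop :=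
  ∀ U : Set (StoneCech X), IsOpen U → ∀ x ∈ U,
    ∃ V : Set (StoneCech X), IsClopen V ∧ x ∈ V ∧ V ⊆ U

/-- `Δ` is an order-isomorphism from the subset `A` of one-point extensions of `X` (with the
order `≤`) onto the subset `B` of one-point extensions of `Y`, where extensions are regarded
up to the equivalence `OnePointExt.equiv`: `Δ` maps `A` into `B`, reflects and preserves `≤`
on `A`, and every member of `B` is equivalent to the image of a member of `A`. -/
def RestrictedOrderIso {X Y : Type u} [TopologicalSpace X] [TopologicalSpace Y]
    (A : Set (OnePointExt X)) (B : Set (OnePointExt Y))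
    (Δ : OnePointExt X → OnePointExt Y) : Prop :=
  (∀ T ∈ A, Δ T ∈ B) ∧
  (∀ T1 ∈ A, ∀ T2 ∈ A, (T1.le T2 ↔ (Δ T1).le (Δ T2))) ∧
  (∀ S ∈ B, ∃ T ∈ A, (Δ T).equiv S)


theorem auxP {P : (Z : Type u) → [TopologicalSpace Z] → Prop}
    (hProp : TopProperty P) (hHer : ClosedHereditary P)
    {Y : Type u} [TopologicalSpace Y] {A B : Set Y}
    (hP : P B) (hAB : A ⊆ B) (hA : IsClosed A) : P A := by
  have hF : IsClosed ((Subtype.val : B → Y) ⁻¹' A) := hA.preimage continuous_subtype_val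
  refine hProp _ _ ?_ (hHer _ hP _ hF)
  exact
    { toFun := fun x => ⟨x.1.1, x.2⟩
      invFun := fun y => ⟨⟨y.1, hAB y.2⟩, y.2⟩
      left_inv := fun x => rfl
      right_inv := fun y => rfl
      continuous_toFun :=
        Continuous.subtype_mk (continuous_subtype_val.comp continuous_subtype_val) _
      continuous_invFun :=
        Continuous.subtype_mk (Continuous.subtype_mk continuous_subtype_val _) _ }

theorem aux_closure_preimage {Y : Type u} [TopologicalSpace Y] [T35Space Y]
    (S : Set Y) :
    stoneCechUnit ⁻¹' closure (stoneCechUnit '' S) ⊆ closure S := by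
  intro x hx
  by_contra hxc
  obtain ⟨f, hf, hf0, hf1⟩ :=
    CompletelyRegularSpace.completely_regular x (closure S) isClosed_closure hxc
  have hFι : ∀ y, stoneCechExtend hf (stoneCechUnit y) = f y := fun y =>
    congrFun (stoneCechExtend_extends hf) y
  have h1 : closure (stoneCechUnit '' S) ⊆ stoneCechExtend hf ⁻¹' {1} := by
    apply closure_minimal
    · rintro _ ⟨y, hy, rfl⟩
      simp only [mem_preimage, mem_singleton_iff, hFι]
      exact hf1 (subset_closure hy)
    · exact isClosed_singleton.preimage (continuous_stoneCechExtend hf)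
  have h2 := h1 hx
  rw [mem_preimage, mem_singleton_iff, hFι, hf0] at h2
  exact zero_ne_one h2

theorem aux_dense {Y : Type u} [TopologicalSpace Y]
    {U : Set (StoneCech Y)} (hU : IsOpen U) :
    U ⊆ closure (stoneCechUnit '' (stoneCechUnit ⁻¹' U)) := by
  calc U ⊆ closure (U ∩ range stoneCechUnit) :=
        Dense.open_subset_closure_inter denseRange_stoneCechUnit hU
    _ = closure (stoneCechUnit '' (stoneCechUnit ⁻¹' U)) := by
        rw [image_preimage_eq_inter_range]

/-- Let `X` be a Tychonoff space and `P` a closed hereditary topological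
property.  Then `λ_P X = ⋃ { int_{βX} cl_{βX} Z : Z a zero-set of X having P }`. -/
theorem stmt12 {X : Type u} [TopologicalSpace X] [T35Space X]
    (P : (Z : Type u) → [TopologicalSpace Z] → Prop)
    (hProp : TopProperty P) (hHer : ClosedHereditary P) :
    lambdaP P X = ⋃ Z ∈ {Z : Set X | IsZeroSet Z ∧ P Z},
      interior (closure (stoneCechUnit '' Z)) := by
  apply subset_antisymm
  · rintro t ht
    rw [lambdaP] at ht
    simp only [mem_iUnion, mem_setOf_eq, exists_prop] at ht ⊢
    obtain ⟨C, ⟨hC, hPC⟩, htC⟩ := ht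
    set U := interior (closure (stoneCechUnit '' C)) with hUdef
    obtain ⟨f, hf0, hf1, hficc⟩ := exists_continuous_zero_one_of_isClosed
      (isClosed_singleton (x := t)) isOpen_interior.isClosed_compl
      (disjoint_singleton_left.mpr (notMem_compl_iff.mpr htC))
    set Z : Set X := {x | f (stoneCechUnit x) ≤ 1/2} with hZdef
    have hZclosed : IsClosed Z :=
      isClosed_le ((map_continuous f).comp continuous_stoneCechUnit) continuous_const
    refine ⟨Z, ⟨?_, ?_⟩, ?_⟩
    · refine ⟨fun x => projIcc (0:ℝ) 1 zero_le_one (f (stoneCechUnit x) - 1/2),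
        continuous_projIcc.comp
          (((map_continuous f).comp continuous_stoneCechUnit).sub continuous_const), ?_⟩
      ext x
      simp [hZdef, projIcc_eq_zero, sub_nonpos]
    · refine auxP hProp hHer hPC ?_ hZclosed
      intro x hx
      have h2 : stoneCechUnit x ∈ U := by
        by_contra h
        have h1 := hf1 h
        simp only [Pi.one_apply] at h1
        have : f (stoneCechUnit x) ≤ 1/2 := hx
        rw [h1] at this
        norm_num at this
      have h3 := interior_subset h2
      exact aux_closure_preimage C h3
    · have hopen : IsOpen {y : StoneCech X | f y < 1/2} :=
        isOpen_lt (map_continuous f) continuous_const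
      have hsub : {y : StoneCech X | f y < 1/2} ⊆ closure (stoneCechUnit '' Z) := by
        refine (aux_dense hopen).trans (closure_mono (image_mono ?_))
        intro x hx
        simp only [mem_preimage, mem_setOf_eq] at hx
        exact le_of_lt hx
      have ht2 : t ∈ {y : StoneCech X | f y < 1/2} := by
        have := hf0 (mem_singleton t)
        simp only [Pi.zero_apply] at this
        simp [this]
      exact interior_maximal hsub hopen ht2
  · rintro t ht
    simp only [mem_iUnion, mem_setOf_eq, exists_prop] at ht
    obtain ⟨Z, ⟨hZzero, hPZ⟩, htZ⟩ := ht
    rw [lambdaP]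
    simp only [mem_iUnion, mem_setOf_eq, exists_prop]
    set U := interior (closure (stoneCechUnit '' Z)) with hUdef
    obtain ⟨f, hf0, hf1, hficc⟩ := exists_continuous_zero_one_of_isClosed
      (isClosed_singleton (x := t)) isOpen_interior.isClosed_compl
      (disjoint_singleton_left.mpr (notMem_compl_iff.mpr htZ))
    set C : Set X := {x | f (stoneCechUnit x) < 1/2} with hCdef
    have hZclosed : IsClosed Z := by
      obtain ⟨g, hg, rfl⟩ := hZzero
      exact isClosed_singleton.preimage hg
    refine ⟨C, ⟨?_, ?_⟩, ?_⟩
    · refine ⟨fun x => projIcc (0:ℝ) 1 zero_le_one (1/2 - f (stoneCechUnit x)),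
        continuous_projIcc.comp
          (continuous_const.sub ((map_continuous f).comp continuous_stoneCechUnit)), ?_⟩
      ext x
      simp [hCdef, projIcc_eq_zero, sub_nonpos, not_le]
    · refine auxP hProp hHer hPZ ?_ isClosed_closure
      have h1 : closure C ⊆ {x : X | f (stoneCechUnit x) ≤ 1/2} :=
        closure_minimal (fun x hx => le_of_lt (show f (stoneCechUnit x) < 1/2 from hx))
          (isClosed_le ((map_continuous f).comp continuous_stoneCechUnit) continuous_const)
      intro x hx
      have h2 : stoneCechUnit x ∈ U := by
        by_contra h
        have hone := hf1 h
        simp only [Pi.one_apply] at hone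
        have h4 : f (stoneCechUnit x) ≤ 1/2 := h1 hx
        rw [hone] at h4
        norm_num at h4
      have h2' := interior_subset h2
      have h3 := aux_closure_preimage Z h2'
      rwa [hZclosed.closure_eq] at h3
    · have hopen : IsOpen {y : StoneCech X | f y < 1/2} :=
        isOpen_lt (map_continuous f) continuous_const
      have hsub : {y : StoneCech X | f y < 1/2} ⊆ closure (stoneCechUnit '' C) := by
        refine (aux_dense hopen).trans (closure_mono (image_mono ?_))
        intro x hx
        simp only [mem_preimage, mem_setOf_eq] at hx
        exact hx
      have ht2 : t ∈ {y : StoneCech X | f y < 1/2} := by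
        have := hf0 (mem_singleton t)
        simp only [Pi.zero_apply] at this
        simp [this]
      exact interior_maximal hsub hopen ht2
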